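/- Let 𝒯 be a finite set of templates, φ a GML(𝒯) formula, c_max = cb(φ) its counting bound, and l = sd(φ) its syntactic depth. Then there exists a bounded 𝒯-GNN 𝒩 with l layers that captures φ: for every finite labelled graph G (over the fixed finite proposition set) and every node v of G, 𝒩(G,v) = 1 if and only if (G,v) ⊨ φ. -/

import Mathlib

set_option maxHeartbeats 1000000

attribute [local instance 10] Classical.propDecidable

/-- A template `T = (V, E⁺, E⁻, r)`: vertex set `Fin (n+1)` (cardinality `n+1`),
root `0`, edges `pos`, non-edges `neg`, with `pos ∩ neg = ∅`. -/
structure Template where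
  n : ℕ
  pos : Finset (Fin (n + 1) × Fin (n + 1))
  neg : Finset (Fin (n + 1) × Fin (n + 1))
  disj : ∀ p, ¬(p ∈ pos ∧ p ∈ neg)

/-- A labelled directed graph with labels in `Λ`: a finite vertex set (a finite
subset of `ℕ`), an edge relation `E ⊆ V × V`, and a labelling of the nodes. -/
structure LGraph (Λ : Type) where
  verts : Finset ℕ
  edge : ℕ → ℕ → Prop
  lab : ℕ → Λ
  edge_mem : ∀ u w, edge u w → u ∈ verts ∧ w ∈ verts

/-- `f` is a template embedding of `T` into the pointed graph `(G, w)`: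
an injective map sending the root to `w`, `E⁺`-pairs to edges and `E⁻`-pairs to
non-edges. -/
def IsEmb {Λ : Type} (T : Template) (G : LGraph Λ) (w : ℕ) (f : Fin (T.n + 1) → ℕ) : Prop :=
  Function.Injective f ∧ f 0 = w ∧ (∀ i, f i ∈ G.verts) ∧
    (∀ p ∈ T.pos, G.edge (f p.1) (f p.2)) ∧ (∀ p ∈ T.neg, ¬ G.edge (f p.1) (f p.2))

/-- The (finite) set `emb(T,(G,w))` of template embeddings of `T` into `(G, w)`. -/
noncomputable def embFinset {Λ : Type} (T : Template) (G : LGraph Λ) (w : ℕ) :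
    Finset (Fin (T.n + 1) → ℕ) :=
  (Fintype.piFinset fun _ : Fin (T.n + 1) => G.verts).filter (IsEmb T G w)

/-- Forth condition: any `k` pairwise distinct template embeddings of `T` at `(G,v)`
can be matched by `k` pairwise distinct embeddings at `(G',v')`, pointwise related
by `Z`. -/
def Forth {Λ : Type} (Z : ℕ → ℕ → Prop) (T : Template) (G G' : LGraph Λ)
    (v v' : ℕ) (k : ℕ) : Prop :=
  ∀ F : Fin k → (Fin (T.n + 1) → ℕ), Function.Injective F → (∀ i, IsEmb T G v (F i)) →
    ∃ F' : Fin k → (Fin (T.n + 1) → ℕ), Function.Injective F' ∧ (∀ i, IsEmb T G' v' (F' i)) ∧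
      ∀ i u, Z (F i u) (F' i u)

/-- `Z` is a graded `l`-`𝒯`-bisimulation between `G` and `G'`, where the allowed
multiplicities `k` in the back-and-forth conditions are those satisfying `P`. -/
def IsBisimP {Λ : Type} (𝒯 : Finset Template) (P : ℕ → Prop) (G G' : LGraph Λ) :
    ℕ → (ℕ → ℕ → Prop) → Prop
  | 0, Z => ∀ v v', Z v v' → G.lab v = G'.lab v'
  | l + 1, Z => ∃ Z', IsBisimP 𝒯 P G G' l Z' ∧
      ∀ v v', Z v v' → Z' v v' ∧ ∀ T ∈ 𝒯, ∀ k, P k →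
        Forth Z' T G G' v v' k ∧ Forth (fun a b => Z' b a) T G' G v' v k

/-- `(G,v)` and `(G',v')` are graded `l`-`𝒯`-bisimilar. -/
def GBisimilar {Λ : Type} (𝒯 : Finset Template) (l : ℕ) (G : LGraph Λ) (v : ℕ)
    (G' : LGraph Λ) (v' : ℕ) : Prop :=
  ∃ Z, IsBisimP 𝒯 (fun k => 1 ≤ k) G G' l Z ∧ Z v v'

/-- `(G,v)` and `(G',v')` are `l`-`c`-`𝒯`-bisimilar (multiplicities restricted to `k ≤ c`). -/
def BBisimilar {Λ : Type} (𝒯 : Finset Template) (l c : ℕ) (G : LGraph Λ) (v : ℕ)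
    (G' : LGraph Λ) (v' : ℕ) : Prop :=
  ∃ Z, IsBisimP 𝒯 (fun k => 1 ≤ k ∧ k ≤ c) G G' l Z ∧ Z v v'

/-- `A↾c`: cap all multiplicities of a multiset at `c`. -/
noncomputable def mcap {α : Type} (c : ℕ) (m : Multiset α) : Multiset α :=
  m.toFinset.val.bind fun a => Multiset.replicate (min c (m.count a)) a

/-- The `𝒯`-WL colouring of `G` after `l` rounds, using `hash0` for the initial
colouring and `hash` for the refinement rounds; at each round the new colour of `v`
hashes its previous colour together with, for each template `T ∈ 𝒯`, the multiset of
`T`-labelled colourings induced by the template embeddings at `v`. -/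
noncomputable def colWL {Λ C : Type} (𝒯 : Finset Template) (hash0 : Λ → C)
    (hash : C → ((T : {x // x ∈ 𝒯}) → Multiset (Fin (T.1.n + 1) → C)) → C)
    (G : LGraph Λ) : ℕ → ℕ → C
  | 0, v => hash0 (G.lab v)
  | l + 1, v =>
      hash (colWL 𝒯 hash0 hash G l v)
        (fun T => (embFinset T.1 G v).val.map
          (fun f => fun u => colWL 𝒯 hash0 hash G l (f u)))

/-- A multiset function is `c`-bounded if its value is unchanged when all
multiplicities larger than `c` are replaced by `c`. -/
def CBoundedFun {α β : Type} (c : ℕ) (g : Multiset α → β) : Prop :=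
  ∀ m, g m = g (mcap c m)

/-- An `nAr`-ary `L`-layer `𝒯`-GNN with feature dimension `d`: templates from `𝒯`,
template-aggregation functions (invariant under root-fixing label-preserving template
automorphisms), outer multiset aggregation functions, combination functions, and a
Boolean classification function. -/
structure TGNN (𝒯 : Finset Template) (d nAr L : ℕ) where
  temp : Fin L → Fin nAr → Template
  temp_mem : ∀ l j, temp l j ∈ 𝒯
  aggT : (l : Fin L) → (j : Fin nAr) → ((Fin ((temp l j).n + 1) → (Fin d → ℝ)) → (Fin d → ℝ))
  aggT_inv : ∀ (l : Fin L) (j : Fin nAr) (σ : Equiv.Perm (Fin ((temp l j).n + 1)))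
      (lab₁ lab₂ : Fin ((temp l j).n + 1) → (Fin d → ℝ)),
      σ 0 = 0 →
      (∀ p : Fin ((temp l j).n + 1) × Fin ((temp l j).n + 1),
        p ∈ (temp l j).pos ↔ (σ p.1, σ p.2) ∈ (temp l j).pos) →
      (∀ p : Fin ((temp l j).n + 1) × Fin ((temp l j).n + 1),
        p ∈ (temp l j).neg ↔ (σ p.1, σ p.2) ∈ (temp l j).neg) →
      (∀ u, u ≠ 0 → lab₁ u = lab₂ (σ u)) →
      aggT l j lab₁ = aggT l j lab₂
  agg : Fin L → Fin nAr → Multiset (Fin d → ℝ) → (Fin d → ℝ)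
  comb : Fin L → (Fin d → ℝ) → (Fin nAr → (Fin d → ℝ)) → (Fin d → ℝ)
  cls : (Fin d → ℝ) → Bool

/-- The feature vector `λ^l(v)` of node `v` after `l` layers of the `𝒯`-GNN `N` on
input graph `G`. -/
noncomputable def TGNN.feat {𝒯 : Finset Template} {d nAr L : ℕ} (N : TGNN 𝒯 d nAr L)
    (G : LGraph (Fin d → ℝ)) : ℕ → ℕ → (Fin d → ℝ)
  | 0, v => G.lab v
  | l + 1, v =>
      if h : l < L then
        N.comb ⟨l, h⟩ (N.feat G l v)
          (fun j => N.agg ⟨l, h⟩ j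
            ((embFinset (N.temp ⟨l, h⟩ j) G v).val.map
              (fun f => N.aggT ⟨l, h⟩ j (fun u => N.feat G l (f u)))))
      else fun _ => 0

/-- A `𝒯`-GNN is `c`-bounded if all its outer aggregation functions are `c`-bounded. -/
def TGNN.IsCBounded {𝒯 : Finset Template} {d nAr L : ℕ} (N : TGNN 𝒯 d nAr L) (c : ℕ) : Prop :=
  ∀ l j, CBoundedFun c (N.agg l j)

def boolToReal (b : Bool) : ℝ := if b then 1 else 0

/-- Identify a `{0,1}^d`-labelled graph with a real-vector labelled graph. -/
def LGraph.toReal {d : ℕ} (G : LGraph (Fin d → Bool)) : LGraph (Fin d → ℝ) :=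
  ⟨G.verts, G.edge, fun v i => boolToReal (G.lab v i), G.edge_mem⟩

/-- Initialize real feature vectors of dimension `d'` from `{0,1}^a`-labels
(the first `a` coordinates hold the truth values of the propositions, the rest are `0`). -/
def initG {a : ℕ} (d' : ℕ) (G : LGraph (Fin a → Bool)) : LGraph (Fin d' → ℝ) :=
  ⟨G.verts, G.edge, fun v i => if h : (i : ℕ) < a then boolToReal (G.lab v ⟨i, h⟩) else 0,
    G.edge_mem⟩

/-- Formulae of graded template modal logic `GML(𝒯)` over propositions `AP`
(`⊤` included; a modality `⟨T⟩^{≥j}(φ₁,…,φ_{n_T})` takes `n_T = |V_T| - 1` arguments). -/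
inductive GML (AP : Type) : Type
  | top : GML AP
  | prop : AP → GML AP
  | neg : GML AP → GML AP
  | and : GML AP → GML AP → GML AP
  | dia : (T : Template) → ℕ → (Fin T.n → GML AP) → GML AP

/-- Semantics of `GML(𝒯)` on pointed labelled graphs:
`(G,v) ⊨ ⟨T⟩^{≥j}(φ⃗)` iff at least `j` embeddings `f ∈ emb(T,(G,v))` satisfy
`(G, f(i)) ⊨ φᵢ` for all `1 ≤ i ≤ n_T`. -/
def Sat {AP : Type} (G : LGraph (AP → Bool)) : GML AP → ℕ → Prop
  | .top, _ => True
  | .prop p, v => G.lab v p = true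
  | .neg φ, v => ¬ Sat G φ v
  | .and φ ψ, v => Sat G φ v ∧ Sat G ψ v
  | .dia T j φs, v =>
      j ≤ ((embFinset T G v).filter
        (fun f => ∀ i : Fin T.n, Sat G (φs i) (f i.succ))).card

/-- Modal depth. -/
def GML.md {AP : Type} : GML AP → ℕ
  | .top => 0
  | .prop _ => 0
  | .neg φ => φ.md
  | .and φ ψ => max φ.md ψ.md
  | .dia _ _ φs => 1 + Finset.univ.sup fun i => (φs i).md

/-- Counting bound: the least `c` such that every modality `⟨T⟩^{≥j}` occurring in the
formula has `j ≤ c`. -/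
def GML.cb {AP : Type} : GML AP → ℕ
  | .top => 0
  | .prop _ => 0
  | .neg φ => φ.cb
  | .and φ ψ => max φ.cb ψ.cb
  | .dia _ j φs => max j (Finset.univ.sup fun i => (φs i).cb)

/-- Syntactic depth: counts both Boolean connectives and modalities along the deepest
branch of the syntax tree. -/
def GML.sd {AP : Type} : GML AP → ℕ
  | .top => 0
  | .prop _ => 0
  | .neg φ => 1 + φ.sd
  | .and φ ψ => 1 + max φ.sd ψ.sd
  | .dia _ _ φs => 1 + Finset.univ.sup fun i => (φs i).sd

/-- Well-formedness of a `GML(𝒯)` formula: all templates come from `𝒯` and all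
grades satisfy `j ≥ 1`. -/
def GML.Wf {AP : Type} (𝒯 : Finset Template) : GML AP → Prop
  | .top => True
  | .prop _ => True
  | .neg φ => φ.Wf 𝒯
  | .and φ ψ => φ.Wf 𝒯 ∧ ψ.Wf 𝒯
  | .dia T j φs => T ∈ 𝒯 ∧ 1 ≤ j ∧ ∀ i, (φs i).Wf 𝒯

/-- Finite conjunction (`⊤` for the empty list). -/
def bigConj {AP : Type} : List (GML AP) → GML AP
  | [] => .top
  | φ :: rest => .and φ (bigConj rest)

/-- `|S^{(G,v)}_{T,φ⃗}|`: the number of embeddings `f ∈ emb(T,(G,v))` with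
`(G, f(i)) ⊨ φᵢ` for all `1 ≤ i ≤ n_T`. -/
noncomputable def Scard {AP : Type} (G : LGraph (AP → Bool)) (T : Template) (v : ℕ)
    (φs : Fin T.n → GML AP) : ℕ :=
  ((embFinset T G v).filter (fun f => ∀ i : Fin T.n, Sat G (φs i) (f i.succ))).card

/-- The `l`-characteristic formula `χ^l_{(G,v)}`. -/
noncomputable def charU {AP : Type} [Fintype AP] (𝒯 : Finset Template) :
    ℕ → LGraph (AP → Bool) → ℕ → GML AP
  | 0 => fun G v =>
      bigConj ((Finset.univ : Finset AP).toList.map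
        (fun p => if G.lab v p then GML.prop p else GML.neg (GML.prop p)))
  | l + 1 => fun G v =>
      GML.and (charU 𝒯 l G v)
        (bigConj (𝒯.toList.map (fun T =>
          GML.and
            (bigConj ((embFinset T G v).toList.map (fun f =>
              GML.dia T (Scard G T v (fun i => charU 𝒯 l G (f i.succ)))
                (fun i => charU 𝒯 l G (f i.succ)))))
            (GML.neg (GML.dia T (Scard G T v (fun _ => GML.top) + 1)
              (fun _ => GML.top))))))

/-- `reps m` is a system of representatives for the `m`-`c`-`𝒯`-bisimilarity classes of
finite pointed labelled graphs: every representative is a genuine pointed graph, every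
pointed graph is `m`-`c`-`𝒯`-bisimilar to some representative, and distinct
representatives are non-bisimilar. -/
def RepSystem {AP : Type} (𝒯 : Finset Template) (c : ℕ)
    (reps : ℕ → Finset (LGraph (AP → Bool) × ℕ)) : Prop :=
  ∀ m : ℕ,
    (∀ q ∈ reps m, q.2 ∈ q.1.verts) ∧
    (∀ (G : LGraph (AP → Bool)) (v : ℕ), v ∈ G.verts →
      ∃ q ∈ reps m, BBisimilar 𝒯 m c q.1 q.2 G v) ∧
    (∀ q ∈ reps m, ∀ q' ∈ reps m, BBisimilar 𝒯 m c q.1 q.2 q'.1 q'.2 → q = q')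

/-- The bounded `l`-`c`-characteristic formula `χ^{l,c}_{(G,v)}`, relative to a chosen
system `reps` of representatives of the bounded bisimilarity classes. -/
noncomputable def charB {AP : Type} [Fintype AP] (𝒯 : Finset Template) (c : ℕ)
    (reps : ℕ → Finset (LGraph (AP → Bool) × ℕ)) :
    ℕ → LGraph (AP → Bool) → ℕ → GML AP
  | 0 => fun G v =>
      bigConj ((Finset.univ : Finset AP).toList.map
        (fun p => if G.lab v p then GML.prop p else GML.neg (GML.prop p)))
  | l + 1 => fun G v =>
      GML.and (charB 𝒯 c reps l G v)
        (bigConj (𝒯.toList.map (fun T =>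
          GML.and
            (bigConj ((embFinset T G v).toList.map (fun f =>
              GML.dia T (min c (Scard G T v (fun i => charB 𝒯 c reps l G (f i.succ))))
                (fun i => charB 𝒯 c reps l G (f i.succ)))))
            (bigConj (((Fintype.piFinset (fun _ : Fin T.n => reps l)).filter
                (fun t => Scard G T v
                  (fun i => charB 𝒯 c reps l (t i).1 (t i).2) + 1 ≤ c)).toList.map
              (fun t => GML.neg (GML.dia T
                  (Scard G T v (fun i => charB 𝒯 c reps l (t i).1 (t i).2) + 1)
                  (fun i => charB 𝒯 c reps l (t i).1 (t i).2))))))))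

/-- Standard graded forth condition on out-neighbours. -/
def StdForth {Λ : Type} (Z : ℕ → ℕ → Prop) (G G' : LGraph Λ) (v v' : ℕ) (k : ℕ) : Prop :=
  ∀ us : Fin k → ℕ, Function.Injective us → (∀ i, G.edge v (us i)) →
    ∃ us' : Fin k → ℕ, Function.Injective us' ∧ (∀ i, G'.edge v' (us' i)) ∧
      ∀ i, Z (us i) (us' i)

/-- `Z` is a standard graded `l`-bisimulation (the relation underlying standard 1-WL
colour refinement). -/
def IsStdBisim {Λ : Type} (G G' : LGraph Λ) : ℕ → (ℕ → ℕ → Prop) → Prop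
  | 0, Z => ∀ v v', Z v v' → G.lab v = G'.lab v'
  | l + 1, Z => ∃ Z', IsStdBisim G G' l Z' ∧
      ∀ v v', Z v v' → Z' v v' ∧ ∀ k, 1 ≤ k →
        StdForth Z' G G' v v' k ∧ StdForth (fun a b => Z' b a) G' G v' v k

/-- `(G,v)` and `(G',v')` are standard graded `l`-bisimilar. -/
def StdBisimilar {Λ : Type} (l : ℕ) (G : LGraph Λ) (v : ℕ) (G' : LGraph Λ) (v' : ℕ) : Prop :=
  ∃ Z, IsStdBisim G G' l Z ∧ Z v v'

/-- The edge template `T₁ = ({r,a}, E⁺ = {(r,a)}, E⁻ = ∅, r)`. -/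
def T1 : Template := ⟨1, {(0, 1)}, ∅, by decide⟩

/-- The triangle template `T△ = ({r,a,b}, E⁺ = {(r,a),(a,b),(b,r)}, E⁻ = ∅, r)`. -/
def Ttri : Template := ⟨2, {(0, 1), (1, 2), (2, 0)}, ∅, by decide⟩

/-- The directed 3-cycle, all nodes with the same constant label. -/
def G3 : LGraph Unit where
  verts := {0, 1, 2}
  edge u w := (u = 0 ∧ w = 1) ∨ (u = 1 ∧ w = 2) ∨ (u = 2 ∧ w = 0)
  lab _ := ()
  edge_mem := by rintro u w (⟨rfl, rfl⟩ | ⟨rfl, rfl⟩ | ⟨rfl, rfl⟩) <;> simp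

/-- The directed 6-cycle, all nodes with the same constant label. -/
def G6 : LGraph Unit where
  verts := Finset.range 6
  edge u w := u < 6 ∧ w = (u + 1) % 6
  lab _ := ()
  edge_mem := by
    rintro u w ⟨hu, rfl⟩
    simp only [Finset.mem_range]
    omega
namespace LGNN

/-- List of subformulae. -/
def subs {AP : Type} : GML AP → List (GML AP)
  | .top => [.top]
  | .prop p => [.prop p]
  | .neg ψ => .neg ψ :: subs ψ
  | .and ψ χ => .and ψ χ :: (subs ψ ++ subs χ)
  | .dia T j ψs => .dia T j ψs :: (List.finRange T.n).flatMap (fun i => subs (ψs i))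

lemma self_mem_subs {AP : Type} (φ : GML AP) : φ ∈ subs φ := by
  cases φ <;> simp [subs]

lemma subs_subset {AP : Type} (φ ψ : GML AP) (h : ψ ∈ subs φ) : subs ψ ⊆ subs φ := by
  induction φ with
  | top => simp [subs] at h; subst h; simp [subs]
  | prop p => simp [subs] at h; subst h; simp [subs]
  | neg χ ih =>
      rcases (by simpa [subs] using h : ψ = .neg χ ∨ ψ ∈ subs χ) with rfl | h
      · exact fun _ h => h
      · exact fun x hx => List.mem_cons_of_mem _ (ih h hx)
  | and χ₁ χ₂ ih1 ih2 =>
      rcases (by simpa [subs] using h : ψ = .and χ₁ χ₂ ∨ ψ ∈ subs χ₁ ∨ ψ ∈ subs χ₂) with rfl | h | h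
      · exact fun _ h => h
      · exact fun x hx => List.mem_cons_of_mem _ (List.mem_append_left _ (ih1 h hx))
      · exact fun x hx => List.mem_cons_of_mem _ (List.mem_append_right _ (ih2 h hx))
  | dia T j ψs ih =>
      rcases (by simpa [subs] using h : ψ = .dia T j ψs ∨ ∃ i, ψ ∈ subs (ψs i)) with rfl | ⟨i, h⟩
      · exact fun _ h => h
      · intro x hx
        refine List.mem_cons_of_mem _ ?_
        simp only [List.mem_flatMap]
        exact ⟨i, by simp [List.mem_finRange], ih i h hx⟩

lemma wf_of_mem_subs {AP : Type} (𝒯 : Finset Template) (φ ψ : GML AP) (hφ : φ.Wf 𝒯)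
    (h : ψ ∈ subs φ) : ψ.Wf 𝒯 := by
  induction φ with
  | top => simp [subs] at h; subst h; exact hφ
  | prop p => simp [subs] at h; subst h; exact hφ
  | neg χ ih =>
      rcases (by simpa [subs] using h : ψ = .neg χ ∨ ψ ∈ subs χ) with rfl | h
      · exact hφ
      · exact ih hφ h
  | and χ₁ χ₂ ih1 ih2 =>
      rcases (by simpa [subs] using h : ψ = .and χ₁ χ₂ ∨ ψ ∈ subs χ₁ ∨ ψ ∈ subs χ₂) with rfl | h | h
      · exact hφ
      · exact ih1 hφ.1 h
      · exact ih2 hφ.2 h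
  | dia T j ψs ih =>
      rcases (by simpa [subs] using h : ψ = .dia T j ψs ∨ ∃ i, ψ ∈ subs (ψs i)) with rfl | ⟨i, h⟩
      · exact hφ
      · exact ih i (hφ.2.2 i) h

end LGNN
namespace LGNN

noncomputable def idx {AP : Type} (S : List (GML AP)) (ψ : GML AP) : ℕ :=
  S.findIdx (fun x => decide (x = ψ))

lemma idx_lt {AP : Type} {S : List (GML AP)} {ψ : GML AP} (h : ψ ∈ S) :
    idx S ψ < S.length :=
  List.findIdx_lt_length_of_exists ⟨ψ, h, by simp⟩

lemma getElem_idx {AP : Type} {S : List (GML AP)} {ψ : GML AP} (h : ψ ∈ S) :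
    S[idx S ψ]'(idx_lt h) = ψ := by
  have := List.findIdx_getElem (w := idx_lt h)
  exact of_decide_eq_true this

/-- Root-fixing automorphisms of a template. -/
noncomputable def AutT (T : Template) : Finset (Equiv.Perm (Fin (T.n + 1))) :=
  Finset.univ.filter fun σ => σ 0 = 0 ∧
    (∀ p : Fin (T.n + 1) × Fin (T.n + 1), p ∈ T.pos ↔ (σ p.1, σ p.2) ∈ T.pos) ∧
    (∀ p : Fin (T.n + 1) × Fin (T.n + 1), p ∈ T.neg ↔ (σ p.1, σ p.2) ∈ T.neg)

lemma mem_AutT {T : Template} {σ : Equiv.Perm (Fin (T.n + 1))} :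
    σ ∈ AutT T ↔ σ 0 = 0 ∧
    (∀ p : Fin (T.n + 1) × Fin (T.n + 1), p ∈ T.pos ↔ (σ p.1, σ p.2) ∈ T.pos) ∧
    (∀ p : Fin (T.n + 1) × Fin (T.n + 1), p ∈ T.neg ↔ (σ p.1, σ p.2) ∈ T.neg) := by
  simp [AutT]

lemma one_mem_AutT (T : Template) : (1 : Equiv.Perm (Fin (T.n + 1))) ∈ AutT T := by
  simp [mem_AutT]

lemma AutT_card_pos (T : Template) : 0 < (AutT T).card :=
  Finset.card_pos.2 ⟨1, one_mem_AutT T⟩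

lemma inv_mem_AutT {T : Template} {σ : Equiv.Perm (Fin (T.n + 1))} (h : σ ∈ AutT T) :
    σ⁻¹ ∈ AutT T := by
  rw [mem_AutT] at h ⊢
  obtain ⟨h0, hp, hn⟩ := h
  refine ⟨?_, fun p => ?_, fun p => ?_⟩
  · apply σ.injective; simp [h0]
  · have := hp (σ⁻¹ p.1, σ⁻¹ p.2); simpa using this.symm
  · have := hn (σ⁻¹ p.1, σ⁻¹ p.2); simpa using this.symm

lemma mul_mem_AutT {T : Template} {σ τ : Equiv.Perm (Fin (T.n + 1))}
    (hσ : σ ∈ AutT T) (hτ : τ ∈ AutT T) : σ * τ ∈ AutT T := by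
  rw [mem_AutT] at hσ hτ ⊢
  refine ⟨by simp [Equiv.Perm.mul_apply, hτ.1, hσ.1], fun p => ?_, fun p => ?_⟩
  · exact (hτ.2.1 p).trans (hσ.2.1 (τ p.1, τ p.2))
  · exact (hτ.2.2 p).trans (hσ.2.2 (τ p.1, τ p.2))

lemma comp_mem_embFinset {Λ : Type} {T : Template} {G : LGraph Λ} {v : ℕ}
    {f : Fin (T.n + 1) → ℕ} (hf : f ∈ embFinset T G v)
    {σ : Equiv.Perm (Fin (T.n + 1))} (hσ : σ ∈ AutT T) :
    f ∘ σ ∈ embFinset T G v := by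
  rw [mem_AutT] at hσ
  simp only [embFinset, Finset.mem_filter, Fintype.mem_piFinset] at hf ⊢
  obtain ⟨hmem, hinj, h0, hverts, hpos, hneg⟩ := hf
  refine ⟨fun i => hmem _, hinj.comp σ.injective, by simp [Function.comp, hσ.1, h0],
    fun i => hverts _, fun p hp => ?_, fun p hp => ?_⟩
  · exact hpos (σ p.1, σ p.2) ((hσ.2.1 p).1 hp)
  · exact hneg (σ p.1, σ p.2) ((hσ.2.2 p).1 hp)

lemma mem_embFinset_iff {Λ : Type} {T : Template} {G : LGraph Λ} {v : ℕ}
    {f : Fin (T.n + 1) → ℕ} : f ∈ embFinset T G v ↔ (∀ i, f i ∈ G.verts) ∧ IsEmb T G v f := by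
  simp [embFinset, Fintype.mem_piFinset]

/-- Double counting: summing automorphism-twisted counts over all embeddings. -/
lemma double_count {Λ : Type} (T : Template) (G : LGraph Λ) (v : ℕ)
    (P : Fin T.n → ℕ → Prop) :
    (∑ f ∈ embFinset T G v,
        ((AutT T).filter (fun σ => ∀ i, P i (f (σ i.succ)))).card)
      = (AutT T).card *
        ((embFinset T G v).filter (fun f => ∀ i, P i (f i.succ))).card := by
  have key : ∀ σ ∈ AutT T,
      ((embFinset T G v).filter (fun f => ∀ i, P i (f (σ i.succ)))).card
        = ((embFinset T G v).filter (fun f => ∀ i, P i (f i.succ))).card := by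
    intro σ hσ
    refine Finset.card_bij' (fun f _ => f ∘ ⇑σ) (fun g _ => g ∘ ⇑σ⁻¹) ?_ ?_ ?_ ?_
    · intro f hf
      rw [Finset.mem_filter] at hf ⊢
      exact ⟨comp_mem_embFinset hf.1 hσ, fun i => hf.2 i⟩
    · intro g hg
      rw [Finset.mem_filter] at hg ⊢
      refine ⟨comp_mem_embFinset hg.1 (inv_mem_AutT hσ), fun i => ?_⟩
      have := hg.2 i
      simpa [Function.comp] using this
    · intro f _; funext u; simp [Function.comp]
    · intro g _; funext u; simp [Function.comp]
  calc (∑ f ∈ embFinset T G v,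
        ((AutT T).filter (fun σ => ∀ i, P i (f (σ i.succ)))).card)
      = ∑ f ∈ embFinset T G v, ∑ σ ∈ AutT T,
          (if (∀ i, P i (f (σ i.succ))) then 1 else 0) := by
        refine Finset.sum_congr rfl fun f _ => ?_
        rw [Finset.card_filter]
    _ = ∑ σ ∈ AutT T, ∑ f ∈ embFinset T G v,
          (if (∀ i, P i (f (σ i.succ))) then 1 else 0) := Finset.sum_comm
    _ = ∑ σ ∈ AutT T,
          ((embFinset T G v).filter (fun f => ∀ i, P i (f i.succ))).card := by
        refine Finset.sum_congr rfl fun σ hσ => ?_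
        rw [← Finset.card_filter]
        exact key σ hσ
    _ = (AutT T).card * _ := by rw [Finset.sum_const, smul_eq_mul]

end LGNN
namespace LGNN

lemma count_mcap {α : Type} (c : ℕ) (m : Multiset α) (b : α) :
    (mcap c m).count b = min c (m.count b) := by
  rw [mcap, Multiset.count_bind]
  have : (Multiset.map (fun a => (Multiset.replicate (min c (m.count a)) a).count b)
      m.toFinset.val).sum
      = ∑ x ∈ m.toFinset, (if b = x then min c (m.count x) else 0) := by
    refine Finset.sum_congr rfl fun x _ => ?_
    rw [Multiset.count_replicate]
    by_cases h : b = x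
    · subst h; simp
    · simp [h, Ne.symm h]
  rw [this, Finset.sum_ite_eq]
  by_cases hb : b ∈ m.toFinset
  · simp [hb]
  · simp only [hb, if_false]
    rw [Multiset.mem_toFinset] at hb
    simp [Multiset.count_eq_zero_of_notMem hb]

lemma mcap_idem {α : Type} (c : ℕ) (m : Multiset α) : mcap c (mcap c m) = mcap c m := by
  ext b
  simp [count_mcap, min_assoc]

lemma toFinset_mcap {α : Type} {c : ℕ} (hc : 1 ≤ c) (m : Multiset α) :
    (mcap c m).toFinset = m.toFinset := by
  ext b
  simp only [Multiset.mem_toFinset, ← Multiset.count_pos, count_mcap]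
  omega

lemma capped_le_iff {α : Type} (v : α → ℕ) {c K : ℕ} (hc1 : 1 ≤ c) (hcK : K ≤ c)
    (m : Multiset α) :
    K ≤ ((mcap c m).map v).sum ↔ K ≤ (m.map v).sum := by
  rw [Finset.sum_multiset_map_count, Finset.sum_multiset_map_count, toFinset_mcap hc1]
  simp only [count_mcap, smul_eq_mul]
  by_cases hex : ∃ x ∈ m.toFinset, c ≤ m.count x ∧ 1 ≤ v x
  · obtain ⟨x, hx, hcx, hvx⟩ := hex
    constructor
    · intro _
      calc K ≤ c := hcK
        _ ≤ (m.count x) * v x := by nlinarith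
        _ ≤ ∑ y ∈ m.toFinset, (m.count y) * v y :=
            Finset.single_le_sum (f := fun y => (m.count y) * v y) (fun _ _ => Nat.zero_le _) hx
    · intro _
      calc K ≤ c := hcK
        _ ≤ (min c (m.count x)) * v x := by
            rw [min_eq_left hcx]; nlinarith
        _ ≤ ∑ y ∈ m.toFinset, (min c (m.count y)) * v y :=
            Finset.single_le_sum (f := fun y => (min c (m.count y)) * v y) (fun _ _ => Nat.zero_le _) hx
  · push_neg at hex
    have : ∀ x ∈ m.toFinset, (min c (m.count x)) * v x = m.count x * v x := by
      intro x hx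
      rcases Nat.lt_or_ge (m.count x) c with h | h
      · rw [min_eq_right h.le]
      · have := hex x hx h; interval_cases (v x) <;> simp
    rw [Finset.sum_congr rfl this]

lemma le_list_sum {x : ℕ} {L : List ℕ} (h : x ∈ L) : x ≤ L.sum := by
  induction L with
  | nil => simp at h
  | cons y ys ih =>
      rcases List.mem_cons.1 h with rfl | h
      · simp [List.sum_cons]
      · have := ih h; simp [List.sum_cons]; omega

end LGNN
namespace LGNN

variable {a : ℕ}

lemma d_pos (φ : GML (Fin a)) : 0 < a + (subs φ).length := by
  have := List.length_pos_of_mem (self_mem_subs φ)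
  omega

/-- Data associated to a subformula arm: template, grade, argument formulas. -/
def dD (T₀ : Template) {AP : Type} : GML AP → Σ T : Template, ℕ × (Fin T.n → GML AP)
  | .dia T j ψs => ⟨T, j, ψs⟩
  | _ => ⟨T₀, 0, fun _ => .top⟩

lemma dD_mem {AP : Type} (𝒯 : Finset Template) (T₀ : Template) (hT₀ : T₀ ∈ 𝒯)
    (ψ : GML AP) (hψ : ψ.Wf 𝒯) : (dD T₀ ψ).1 ∈ 𝒯 := by
  cases ψ <;> simp [dD] <;> first | exact hT₀ | exact hψ.1

/-- Read the truth value of a subformula from a feature vector. -/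
noncomputable def rv (φ : GML (Fin a)) (ψ : GML (Fin a))
    (x : Fin (a + (subs φ).length) → ℝ) : ℝ :=
  match ψ with
  | .top => 1
  | .prop p => x ⟨(p : ℕ), Nat.lt_of_lt_of_le p.isLt (Nat.le_add_right _ _)⟩
  | ψ => if h : idx (subs φ) ψ < (subs φ).length then
      x ⟨a + idx (subs φ) ψ, by omega⟩ else 0

/-- Per-coordinate update function. -/
noncomputable def updF (φ : GML (Fin a)) (ψ : GML (Fin a))
    (x : Fin (a + (subs φ).length) → ℝ)
    (y : Fin (subs φ).length → (Fin (a + (subs φ).length) → ℝ)) : ℝ :=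
  match ψ with
  | .top => 1
  | .prop p => x ⟨(p : ℕ), Nat.lt_of_lt_of_le p.isLt (Nat.le_add_right _ _)⟩
  | .neg χ => if rv φ χ x = 1 then 0 else 1
  | .and χ₁ χ₂ => if (rv φ χ₁ x = 1 ∧ rv φ χ₂ x = 1) then 1 else 0
  | .dia T j ψs =>
      if h : idx (subs φ) (.dia T j ψs) < (subs φ).length then
        y ⟨idx (subs φ) (.dia T j ψs), h⟩ ⟨0, d_pos φ⟩ else 0

noncomputable def aggTF (φ : GML (Fin a)) (ψ' : GML (Fin a)) (T₀ : Template)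
    (lab : Fin ((dD T₀ ψ').1.n + 1) → (Fin (a + (subs φ).length) → ℝ)) :
    Fin (a + (subs φ).length) → ℝ :=
  fun _ => (((AutT (dD T₀ ψ').1).filter
    (fun σ => ∀ i, rv φ ((dD T₀ ψ').2.2 i) (lab (σ i.succ)) = 1)).card : ℝ)

noncomputable def aggF (φ : GML (Fin a)) (ψ' : GML (Fin a)) (T₀ : Template) (c : ℕ)
    (m : Multiset (Fin (a + (subs φ).length) → ℝ)) : Fin (a + (subs φ).length) → ℝ :=
  fun _ => if ((dD T₀ ψ').2.1 * (AutT (dD T₀ ψ').1).card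
      ≤ ((mcap c m).map (fun x => ⌊x ⟨0, d_pos φ⟩⌋₊)).sum) then 1 else 0

noncomputable def cVal (φ : GML (Fin a)) (T₀ : Template) : ℕ :=
  1 + ((subs φ).map (fun ψ => (dD T₀ ψ).2.1 * (AutT (dD T₀ ψ).1).card)).sum

lemma cVal_pos (φ : GML (Fin a)) (T₀ : Template) : 1 ≤ cVal φ T₀ := by
  simp [cVal]

lemma cVal_ge (φ : GML (Fin a)) (T₀ : Template) {ψ : GML (Fin a)} (h : ψ ∈ subs φ) :
    (dD T₀ ψ).2.1 * (AutT (dD T₀ ψ).1).card ≤ cVal φ T₀ := by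
  have : (dD T₀ ψ).2.1 * (AutT (dD T₀ ψ).1).card ∈
      ((subs φ).map (fun ψ => (dD T₀ ψ).2.1 * (AutT (dD T₀ ψ).1).card)) :=
    List.mem_map_of_mem h
  have := le_list_sum this
  simp only [cVal]
  omega

/-- The GNN constructed for `φ` (when a default template `T₀ ∈ 𝒯` is available). -/
noncomputable def mkN (𝒯 : Finset Template) (T₀ : Template) (hT₀ : T₀ ∈ 𝒯)
    (φ : GML (Fin a)) (hφ : φ.Wf 𝒯) :
    TGNN 𝒯 (a + (subs φ).length) (subs φ).length φ.sd where
  temp := fun _ j => (dD T₀ ((subs φ).getD (j : ℕ) .top)).1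
  temp_mem := by
    intro l j
    have hj : (j : ℕ) < (subs φ).length := j.isLt
    show (dD T₀ ((subs φ).getD (j : ℕ) .top)).1 ∈ 𝒯
    rw [List.getD_eq_getElem _ _ hj]
    exact dD_mem 𝒯 T₀ hT₀ _ (wf_of_mem_subs 𝒯 φ _ hφ (List.getElem_mem hj))
  aggT := fun _ j => aggTF φ ((subs φ).getD (j : ℕ) .top) T₀
  aggT_inv := by
    intro l j σ lab₁ lab₂ h0 hpos hneg hlab
    let ψ' := (subs φ).getD (j : ℕ) GML.top
    have hσ : σ ∈ AutT (dD T₀ ψ').1 := mem_AutT.2 ⟨h0, hpos, hneg⟩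
    funext k
    simp only [aggTF]
    congr 1
    refine Finset.card_bij' (fun τ _ => σ * τ) (fun τ _ => σ⁻¹ * τ) ?_ ?_ ?_ ?_
    · intro τ hτ
      rw [Finset.mem_filter] at hτ ⊢
      refine ⟨mul_mem_AutT hσ hτ.1, fun i => ?_⟩
      have hne : τ i.succ ≠ 0 := by
        intro h
        have h00 : τ 0 = 0 := (mem_AutT.1 hτ.1).1
        exact Fin.succ_ne_zero i (τ.injective (h.trans h00.symm))
      have := hlab (τ i.succ) hne
      rw [Equiv.Perm.mul_apply, ← this]
      exact hτ.2 i
    · intro τ hτ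
      rw [Finset.mem_filter] at hτ ⊢
      refine ⟨mul_mem_AutT (inv_mem_AutT hσ) hτ.1, fun i => ?_⟩
      have h00 : τ 0 = 0 := (mem_AutT.1 hτ.1).1
      have hne : σ⁻¹ (τ i.succ) ≠ 0 := by
        intro h
        have h1 : τ i.succ = 0 := by
          have := congrArg σ h
          simpa [h0] using this
        exact Fin.succ_ne_zero i (τ.injective (h1.trans h00.symm))
      have heq := hlab (σ⁻¹ (τ i.succ)) hne
      rw [Equiv.Perm.mul_apply, heq]
      have : σ (σ⁻¹ (τ i.succ)) = τ i.succ := by simp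
      rw [this]
      exact hτ.2 i
    · intro τ _; group
    · intro τ _; group
  agg := fun _ j => aggF φ ((subs φ).getD (j : ℕ) .top) T₀ (cVal φ T₀)
  comb := fun _ x y k =>
    if h : (k : ℕ) < a then x k
    else updF φ ((subs φ).getD ((k : ℕ) - a) .top) x y
  cls := fun x => decide (rv φ φ x = 1)

end LGNN
namespace LGNN

variable {a : ℕ}

lemma embFinset_initG {T : Template} (d : ℕ) (G : LGraph (Fin a → Bool)) (v : ℕ) :
    embFinset T (initG d G) v = embFinset T G v := rfl

set_option maxHeartbeats 2000000 in
lemma invariant (𝒯 : Finset Template) (T₀ : Template) (hT₀ : T₀ ∈ 𝒯)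
    (φ : GML (Fin a)) (hφ : φ.Wf 𝒯) (G : LGraph (Fin a → Bool)) :
    ∀ l, l ≤ φ.sd → ∀ v ∈ G.verts,
      (∀ (i : ℕ) (hi : i < a),
        (mkN 𝒯 T₀ hT₀ φ hφ).feat (initG (a + (subs φ).length) G) l v
            ⟨i, Nat.lt_of_lt_of_le hi (Nat.le_add_right _ _)⟩
          = if G.lab v ⟨i, hi⟩ then 1 else 0) ∧
      (∀ ψ ∈ subs φ, ψ.sd ≤ l →
        rv φ ψ ((mkN 𝒯 T₀ hT₀ φ hφ).feat (initG (a + (subs φ).length) G) l v)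
          = if Sat G ψ v then 1 else 0) := by
  set N := mkN 𝒯 T₀ hT₀ φ hφ with hN
  set G' := initG (a + (subs φ).length) G with hG'
  intro l
  induction l with
  | zero =>
      intro _ v hv
      constructor
      · intro i hi
        show G'.lab v _ = _
        simp [hG', initG, boolToReal, hi]
      · intro ψ hmem hsd
        match ψ with
        | .top => simp [rv, Sat]
        | .prop p =>
            show G'.lab v _ = _
            simp only [hG', initG, Fin.isValue, p.isLt, dif_pos, boolToReal, Sat]
            congr 1
        | .neg χ => simp [GML.sd] at hsd
        | .and χ₁ χ₂ => simp [GML.sd] at hsd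
        | .dia T jj ψs => simp [GML.sd] at hsd
  | succ l ih =>
      intro hl v hv
      have hlt : l < φ.sd := hl
      have IH := ih (Nat.le_of_succ_le hl)
      have hfeat : ∀ w, N.feat G' (l + 1) w
          = N.comb ⟨l, hlt⟩ (N.feat G' l w)
            (fun j => N.agg ⟨l, hlt⟩ j
              ((embFinset (N.temp ⟨l, hlt⟩ j) G' w).val.map
                (fun f => N.aggT ⟨l, hlt⟩ j (fun u => N.feat G' l (f u))))) := by
        intro w
        simp [TGNN.feat, hlt]
      have hcomb : N.comb ⟨l, hlt⟩ = fun (x : Fin (a + (subs φ).length) → ℝ)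
          (y : Fin (subs φ).length → (Fin (a + (subs φ).length) → ℝ))
          (k : Fin (a + (subs φ).length)) =>
          if _ : (k : ℕ) < a then x k
          else updF φ ((subs φ).getD ((k : ℕ) - a) .top) x y := rfl
      have hprop : ∀ (i : ℕ) (hi : i < a),
          N.feat G' (l + 1) v ⟨i, Nat.lt_of_lt_of_le hi (Nat.le_add_right _ _)⟩
            = if G.lab v ⟨i, hi⟩ then 1 else 0 := by
        intro i hi
        rw [hfeat, hcomb]
        simp only [hi, dif_pos]
        exact (IH v hv).1 i hi
      refine ⟨hprop, ?_⟩
      intro ψ hmem hsd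
      match ψ with
      | .top => simp [rv, Sat]
      | .prop p =>
          have := hprop (p : ℕ) p.isLt
          show N.feat G' (l+1) v _ = _
          rw [this]
          simp [Sat]
          congr
      | .neg χ =>
          have hidx := idx_lt hmem
          have hget : (subs φ).getD (a + idx (subs φ) (GML.neg χ) - a) GML.top = GML.neg χ := by
            rw [Nat.add_sub_cancel_left, List.getD_eq_getElem _ _ hidx]
            exact getElem_idx hmem
          have hχmem : χ ∈ subs φ :=
            subs_subset φ _ hmem (by simp [subs, self_mem_subs])
          have hχsd : χ.sd ≤ l := by
            have : (GML.neg χ).sd = 1 + χ.sd := rfl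
            omega
          have hIH := (IH v hv).2 χ hχmem hχsd
          show (if h : idx (subs φ) (GML.neg χ) < (subs φ).length then
              N.feat G' (l+1) v ⟨a + idx (subs φ) (GML.neg χ), by omega⟩ else 0) = _
          rw [dif_pos hidx, hfeat, hcomb]
          simp only [Nat.not_lt.2 (Nat.le_add_right a _), dif_neg, not_lt,
            Nat.le_add_right, hget]
          show (if rv φ χ (N.feat G' l v) = 1 then (0:ℝ) else 1) = _
          rw [hIH]
          by_cases hS : Sat G χ v <;> simp [hS, Sat]
      | .and χ₁ χ₂ =>
          have hidx := idx_lt hmem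
          have hget : (subs φ).getD (a + idx (subs φ) (GML.and χ₁ χ₂) - a) GML.top
              = GML.and χ₁ χ₂ := by
            rw [Nat.add_sub_cancel_left, List.getD_eq_getElem _ _ hidx]
            exact getElem_idx hmem
          have h1mem : χ₁ ∈ subs φ := subs_subset φ _ hmem (by simp [subs, self_mem_subs])
          have h2mem : χ₂ ∈ subs φ := subs_subset φ _ hmem (by simp [subs, self_mem_subs])
          have h1sd : χ₁.sd ≤ l ∧ χ₂.sd ≤ l := by
            have : (GML.and χ₁ χ₂).sd = 1 + max χ₁.sd χ₂.sd := rfl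
            omega
          have hIH1 := (IH v hv).2 χ₁ h1mem h1sd.1
          have hIH2 := (IH v hv).2 χ₂ h2mem h1sd.2
          show (if h : idx (subs φ) (GML.and χ₁ χ₂) < (subs φ).length then
              N.feat G' (l+1) v ⟨a + idx (subs φ) (GML.and χ₁ χ₂), by omega⟩ else 0) = _
          rw [dif_pos hidx, hfeat, hcomb]
          simp only [Nat.not_lt.2 (Nat.le_add_right a _), dif_neg, not_lt,
            Nat.le_add_right, hget]
          show (if (rv φ χ₁ (N.feat G' l v) = 1 ∧ rv φ χ₂ (N.feat G' l v) = 1)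
              then (1:ℝ) else 0) = _
          rw [hIH1, hIH2]
          by_cases h1 : Sat G χ₁ v <;> by_cases h2 : Sat G χ₂ v <;>
            simp [h1, h2, Sat]
      | .dia T jj ψs =>
          have hidx := idx_lt hmem
          have hget0 : (subs φ).getD (a + idx (subs φ) (GML.dia T jj ψs) - a) GML.top
              = GML.dia T jj ψs := by
            rw [Nat.add_sub_cancel_left, List.getD_eq_getElem _ _ hidx]
            exact getElem_idx hmem
          have hget : (subs φ).getD (idx (subs φ) (GML.dia T jj ψs)) GML.top
              = GML.dia T jj ψs := by
            rw [List.getD_eq_getElem _ _ hidx]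
            exact getElem_idx hmem
          show (if h : idx (subs φ) (GML.dia T jj ψs) < (subs φ).length then
              N.feat G' (l+1) v ⟨a + idx (subs φ) (GML.dia T jj ψs), by omega⟩ else 0) = _
          rw [dif_pos hidx, hfeat, hcomb]
          simp only [Nat.not_lt.2 (Nat.le_add_right a _), dif_neg, not_lt,
            Nat.le_add_right, hget0]
          show (if h : idx (subs φ) (GML.dia T jj ψs) < (subs φ).length then
              (N.agg ⟨l, hlt⟩ ⟨idx (subs φ) (GML.dia T jj ψs), h⟩
                ((embFinset (N.temp ⟨l, hlt⟩ ⟨idx (subs φ) (GML.dia T jj ψs), h⟩) G' v).val.map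
                  (fun f => N.aggT ⟨l, hlt⟩ ⟨idx (subs φ) (GML.dia T jj ψs), h⟩
                    (fun u => N.feat G' l (f u))))) ⟨0, d_pos φ⟩ else 0) = _
          rw [dif_pos hidx]
          show (aggF φ ((subs φ).getD (idx (subs φ) (GML.dia T jj ψs)) GML.top) T₀ (cVal φ T₀)
              ((embFinset (dD T₀ ((subs φ).getD (idx (subs φ) (GML.dia T jj ψs)) GML.top)).1
                  G' v).val.map
                (fun f => aggTF φ ((subs φ).getD (idx (subs φ) (GML.dia T jj ψs)) GML.top) T₀
                  (fun u => N.feat G' l (f u))))) ⟨0, d_pos φ⟩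
            = if Sat G (GML.dia T jj ψs) v then 1 else 0
          rw [hget]
          set E := embFinset T G v with hE
          have hGG' : embFinset (dD T₀ (GML.dia T jj ψs)).1 G' v = E := rfl
          rw [hGG']
          set SS := E.filter (fun f => ∀ i : Fin T.n, Sat G (ψs i) (f i.succ)) with hSS
          set M := E.val.map (fun f => aggTF φ (GML.dia T jj ψs) T₀
            (fun u => N.feat G' l (f u))) with hM
          have hsub : ∀ i : Fin T.n, ψs i ∈ subs φ := by
            intro i
            refine subs_subset φ _ hmem ?_
            simp only [subs, List.mem_cons, List.mem_flatMap]
            exact Or.inr ⟨i, by simp [List.mem_finRange], self_mem_subs _⟩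
          have hsdi : ∀ i : Fin T.n, (ψs i).sd ≤ l := by
            intro i
            have h1 : (GML.dia T jj ψs).sd
                = 1 + Finset.univ.sup (fun i => (ψs i).sd) := rfl
            have h2 : (ψs i).sd ≤ Finset.univ.sup (fun i => (ψs i).sd) :=
              Finset.le_sup (f := fun i => (ψs i).sd) (Finset.mem_univ i)
            omega
          have hcnt : ∀ f ∈ E, ((AutT T).filter (fun σ => ∀ i : Fin T.n,
                rv φ (ψs i) (N.feat G' l (f (σ i.succ))) = 1)).card
              = ((AutT T).filter (fun σ => ∀ i : Fin T.n,
                Sat G (ψs i) (f (σ i.succ)))).card := by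
            intro f hf
            congr 1
            refine Finset.filter_congr ?_
            intro σ _
            refine forall_congr' fun i => ?_
            have hnode : f (σ i.succ) ∈ G.verts := (mem_embFinset_iff.1 hf).1 _
            rw [(IH _ hnode).2 (ψs i) (hsub i) (hsdi i)]
            by_cases hS : Sat G (ψs i) (f (σ i.succ)) <;> simp [hS]
          have hsum : (M.map (fun x => ⌊x ⟨0, d_pos φ⟩⌋₊)).sum
              = (AutT T).card * SS.card := by
            rw [hM, Multiset.map_map]
            have hmapeq : (E.val.map (fun f => ((AutT T).filter (fun σ => ∀ i : Fin T.n,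
                  Sat G (ψs i) (f (σ i.succ)))).card)).sum
                = (AutT T).card * SS.card := double_count T G v (fun i u => Sat G (ψs i) u)
            rw [← hmapeq]
            refine congrArg Multiset.sum (Multiset.map_congr rfl ?_)
            intro f hf
            have hf' : f ∈ E := hf
            have hval : (aggTF φ (GML.dia T jj ψs) T₀ (fun u => N.feat G' l (f u)))
                  ⟨0, d_pos φ⟩
                = (((AutT T).filter (fun σ => ∀ i : Fin T.n,
                    rv φ (ψs i) (N.feat G' l (f (σ i.succ))) = 1)).card : ℝ) := rfl
            simp only [Function.comp_apply]
            rw [hval, Nat.floor_natCast]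
            exact hcnt f hf'
          have hcle : jj * (AutT T).card ≤ cVal φ T₀ := by
            have := cVal_ge φ T₀ hmem
            simpa [dD] using this
          have hiff : jj * (AutT T).card
              ≤ ((mcap (cVal φ T₀) M).map (fun x => ⌊x ⟨0, d_pos φ⟩⌋₊)).sum
              ↔ jj ≤ SS.card := by
            rw [capped_le_iff _ (cVal_pos φ T₀) hcle, hsum, mul_comm jj]
            constructor
            · intro h
              exact Nat.le_of_mul_le_mul_left h (AutT_card_pos T)
            · intro h
              exact Nat.mul_le_mul_left _ h
          have hSat : Sat G (GML.dia T jj ψs) v ↔ jj ≤ SS.card := Iff.rfl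
          show (if jj * (AutT T).card
              ≤ ((mcap (cVal φ T₀) M).map (fun x => ⌊x ⟨0, d_pos φ⟩⌋₊)).sum
              then (1:ℝ) else 0) = _
          by_cases hS : jj ≤ SS.card
          · rw [if_pos (hiff.2 hS), if_pos (hSat.2 hS)]
          · rw [if_neg (fun h => hS (hiff.1 h)), if_neg (fun h => hS (hSat.1 h))]

end LGNN
namespace LGNN

variable {a : ℕ}

/-- Propositional evaluation (for diamond-free formulas). -/
def evalP {AP : Type} : GML AP → (AP → Bool) → Bool
  | .top, _ => true
  | .prop p, g => g p
  | .neg ψ, g => !(evalP ψ g)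
  | .and ψ χ, g => evalP ψ g && evalP χ g
  | .dia _ _ _, _ => false

lemma sat_evalP {AP : Type} (𝒯 : Finset Template) (hemp : ∀ T, T ∉ 𝒯)
    (G : LGraph (AP → Bool)) (φ : GML AP) (hφ : φ.Wf 𝒯) (v : ℕ) :
    Sat G φ v ↔ evalP φ (G.lab v) = true := by
  induction φ with
  | top => simp [Sat, evalP]
  | prop p => simp [Sat, evalP]
  | neg ψ ih => simp [Sat, evalP, ih hφ]
  | and ψ χ ih1 ih2 => simp [Sat, evalP, ih1 hφ.1, ih2 hφ.2]
  | dia T j ψs ih => exact absurd hφ.1 (hemp T)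

/-- The trivial `0`-ary GNN for diamond-free formulas. -/
noncomputable def mkN0 (𝒯 : Finset Template) (φ : GML (Fin a)) : TGNN 𝒯 a 0 φ.sd where
  temp := fun _ j => j.elim0
  temp_mem := fun _ j => j.elim0
  aggT := fun _ j => j.elim0
  aggT_inv := fun _ j => j.elim0
  agg := fun _ j => j.elim0
  comb := fun _ x _ => x
  cls := fun x => evalP φ (fun p => decide (x ⟨(p : ℕ), p.isLt⟩ = 1))

lemma mkN0_feat (𝒯 : Finset Template) (φ : GML (Fin a)) (G : LGraph (Fin a → Bool)) (v : ℕ) :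
    ∀ l, l ≤ φ.sd → (mkN0 𝒯 φ).feat (initG a G) l v = (initG a G).lab v := by
  intro l
  induction l with
  | zero => intro _; rfl
  | succ l ih =>
      intro hl
      have hlt : l < φ.sd := hl
      show (if h : l < φ.sd then _ else _) = _
      rw [dif_pos hlt]
      exact ih (Nat.le_of_succ_le hl)

lemma decide_boolToReal (b : Bool) : decide (boolToReal b = 1) = b := by
  cases b <;> simp [boolToReal]

end LGNN


open LGNN

/-- For every `GML(𝒯)` formula `φ` there is a bounded `𝒯`-GNN `𝒩` with
`sd(φ)` layers capturing `φ`: for every finite labelled graph `G` over the fixed finite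
proposition set and every node `v`, `𝒩(G,v) = 1` iff `(G,v) ⊨ φ`. -/
theorem logic_to_gnn {a : ℕ} (𝒯 : Finset Template) (φ : GML (Fin a)) (hφ : φ.Wf 𝒯) :
    ∃ (d nAr : ℕ) (N : TGNN 𝒯 d nAr φ.sd) (c : ℕ), 1 ≤ c ∧ N.IsCBounded c ∧
      ∀ (G : LGraph (Fin a → Bool)) (v : ℕ), v ∈ G.verts →
        (N.cls (N.feat (initG d G) φ.sd v) = true ↔ Sat G φ v) := by
  by_cases hT : ∃ T₀, T₀ ∈ 𝒯
  · obtain ⟨T₀, hT₀⟩ := hT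
    refine ⟨a + (subs φ).length, (subs φ).length, mkN 𝒯 T₀ hT₀ φ hφ, cVal φ T₀,
      cVal_pos φ T₀, ?_, ?_⟩
    · intro l j m
      show aggF φ ((subs φ).getD ((j : ℕ)) .top) T₀ (cVal φ T₀) m
        = aggF φ ((subs φ).getD ((j : ℕ)) .top) T₀ (cVal φ T₀) (mcap (cVal φ T₀) m)
      funext k
      simp only [aggF, mcap_idem]
    · intro G v hv
      have hinv := (invariant 𝒯 T₀ hT₀ φ hφ G φ.sd le_rfl v hv).2 φ (self_mem_subs φ) le_rfl
      show decide (rv φ φ ((mkN 𝒯 T₀ hT₀ φ hφ).feat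
        (initG (a + (subs φ).length) G) φ.sd v) = 1) = true ↔ _
      rw [hinv]
      by_cases hS : Sat G φ v <;> simp [hS]
  · push_neg at hT
    refine ⟨a, 0, mkN0 𝒯 φ, 1, le_rfl, fun _ j => j.elim0, ?_⟩
    intro G v hv
    rw [mkN0_feat 𝒯 φ G v φ.sd le_rfl]
    show evalP φ (fun p => decide ((initG a G).lab v ⟨(p : ℕ), p.isLt⟩ = 1)) = true ↔ _
    have hfun : (fun p : Fin a => decide ((initG a G).lab v ⟨(p : ℕ), p.isLt⟩ = 1))
        = G.lab v := by
      funext p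
      show decide ((if h : (p : ℕ) < a then boolToReal (G.lab v ⟨(p : ℕ), h⟩) else 0) = 1) = _
      rw [dif_pos p.isLt]
      simp only [Fin.eta]
      exact decide_boolToReal _
    rw [hfun]
    exact (sat_evalP 𝒯 hT G φ hφ v).symm
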